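/- Let A = {a₁,...,a_m} with u(a₁) ≥ u(a₂) ≥ ... ≥ u(a_m) > 0, and for γ ∈ (0,1] let x_γ ∈ Δ(A) be the unique maximizer of Σ_i x(a_i)(1 − γ x(a_i))u(a_i). Suppose the support of x_γ is A* = {a₁,...,a_{k*}} and x_γ is differentiable in γ on the support. Then for every k = 1,...,m, Σ_{i=1}^k (d/dγ) x_γ(a_i) ≤ 0. -/

import Mathlib

open Finset

private lemma prefix_sum_eq (m k : ℕ) (hk : k ≤ m) (g : ℕ → ℝ) :
    (∑ i : Fin m, if (i : ℕ) < k then g i else 0) = ∑ j ∈ Finset.range k, g j := by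
  rw [Fin.sum_univ_eq_sum_range (fun n => if n < k then g n else 0) m,
    ← Finset.sum_filter]
  congr 1
  ext n
  simp only [Finset.mem_filter, Finset.mem_range]
  omega

private lemma cheb (K k : ℕ) (hkK : k ≤ K) (g : ℕ → ℝ)
    (hmono : ∀ a b, a ≤ b → b < K → g a ≤ g b) (hnn : ∀ a, a < K → 0 ≤ g a) :
    (K : ℝ) * ∑ i ∈ Finset.range k, g i ≤ (k : ℝ) * ∑ i ∈ Finset.range K, g i := by
  rcases eq_or_lt_of_le hkK with rfl | hlt
  · exact le_refl _
  · have hsplit : ∑ i ∈ Finset.range K, g i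
        = ∑ i ∈ Finset.range k, g i + ∑ i ∈ Finset.Ico k K, g i := by
      rw [Finset.range_eq_Ico, Finset.range_eq_Ico]
      exact (Finset.sum_Ico_consecutive g (Nat.zero_le k) hkK).symm
    have h1 : ∑ i ∈ Finset.range k, g i ≤ (k : ℝ) * g k := by
      calc ∑ i ∈ Finset.range k, g i ≤ ∑ _i ∈ Finset.range k, g k :=
            Finset.sum_le_sum fun i hi =>
              hmono i k (le_of_lt (Finset.mem_range.mp hi)) hlt
        _ = (k : ℝ) * g k := by simp [Finset.sum_const, nsmul_eq_mul]
    have h2 : ((K : ℝ) - k) * g k ≤ ∑ i ∈ Finset.Ico k K, g i := by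
      calc ((K : ℝ) - k) * g k = ((K - k : ℕ) : ℝ) * g k := by
            rw [Nat.cast_sub hkK]
        _ = ∑ _i ∈ Finset.Ico k K, g k := by
            simp [Finset.sum_const, Nat.card_Ico, nsmul_eq_mul]
        _ ≤ ∑ i ∈ Finset.Ico k K, g i :=
            Finset.sum_le_sum fun i hi => by
              have := Finset.mem_Ico.mp hi
              exact hmono k i this.1 this.2
    have h0 : 0 ≤ g k := hnn k hlt
    have hk0 : (0:ℝ) ≤ (k:ℝ) := Nat.cast_nonneg k
    have hKk : (0:ℝ) ≤ (K:ℝ) - k := by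
      have : (k:ℝ) ≤ (K:ℝ) := Nat.cast_le.mpr hkK; linarith
    rw [hsplit]
    nlinarith [mul_le_mul_of_nonneg_left h2 hk0, mul_le_mul_of_nonneg_left h1 hKk]

/-- the closed form of the optimal solution -/
private noncomputable def fml {m : ℕ} (kstar : ℕ) (S : ℝ) (u : Fin m → ℝ)
    (g : ℝ) (i : Fin m) : ℝ :=
  if (i : ℕ) < kstar then (1 - (kstar : ℝ) / (S * u i)) * (2 * g)⁻¹ + (S * u i)⁻¹ else 0

/-- its derivative -/
private noncomputable def dml {m : ℕ} (kstar : ℕ) (S : ℝ) (u : Fin m → ℝ)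
    (g : ℝ) (i : Fin m) : ℝ :=
  if (i : ℕ) < kstar then -((1 - (kstar : ℝ) / (S * u i)) / (2 * g ^ 2)) else 0

private lemma fml_hasDerivAt {m : ℕ} (kstar : ℕ) (S : ℝ) (u : Fin m → ℝ)
    (g : ℝ) (hg : g ≠ 0) (i : Fin m) :
    HasDerivAt (fun t => fml kstar S u t i) (dml kstar S u g i) g := by
  by_cases hi : (i : ℕ) < kstar
  · have h1 : HasDerivAt (fun t : ℝ => 2 * t) 2 g := by
      simpa using (hasDerivAt_id g).const_mul 2
    have h2 : HasDerivAt (fun t : ℝ => (2 * t)⁻¹) (-2 / (2 * g) ^ 2) g :=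
      h1.inv (mul_ne_zero two_ne_zero hg)
    have h3 := (h2.const_mul (1 - (kstar : ℝ) / (S * u i))).add_const (S * u i)⁻¹
    have hval : dml kstar S u g i
        = (1 - (kstar : ℝ) / (S * u i)) * (-2 / (2 * g) ^ 2) := by
      rw [dml, if_pos hi]
      field_simp
    rw [hval]
    have hfun : (fun t => fml kstar S u t i)
        = fun t : ℝ => (1 - (kstar : ℝ) / (S * u i)) * (2 * t)⁻¹ + (S * u i)⁻¹ := by
      funext t; rw [fml, if_pos hi]
    rw [hfun]
    exact h3
  · have hfun : (fun t => fml kstar S u t i) = fun _ : ℝ => (0 : ℝ) := by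
      funext t; rw [fml, if_neg hi]
    rw [hfun, dml, if_neg hi]
    exact hasDerivAt_const g 0

theorem stmt8 (m : ℕ) (hm : 1 ≤ m) (u : Fin m → ℝ)
    (hdec : ∀ i j : Fin m, i ≤ j → u j ≤ u i) (hpos : ∀ i, 0 < u i)
    (x : ℝ → Fin m → ℝ)
    (hmax : ∀ γ, 0 < γ → γ ≤ 1 → x γ ∈ stdSimplex ℝ (Fin m) ∧
      ∀ y ∈ stdSimplex ℝ (Fin m),
        ∑ i, y i * (1 - γ * y i) * u i ≤ ∑ i, x γ i * (1 - γ * x γ i) * u i)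
    (kstar : ℕ) (hk : kstar ≤ m)
    (hsupp : ∀ γ, 0 < γ → γ ≤ 1 → ∀ i : Fin m, (0 < x γ i ↔ (i : ℕ) < kstar))
    (x' : ℝ → Fin m → ℝ)
    (hderiv : ∀ γ, 0 < γ → γ ≤ 1 → ∀ i : Fin m,
      HasDerivAt (fun g => x g i) (x' γ i) γ) :
    ∀ γ, 0 < γ → γ ≤ 1 → ∀ k ≤ m,
      (∑ i : Fin m, if (i : ℕ) < k then x' γ i else 0) ≤ 0 := by
  -- basic facts
  have hx0 : ∀ g, 0 < g → g ≤ 1 → ∀ i : Fin m, ¬ ((i : ℕ) < kstar) → x g i = 0 := by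
    intro g hg0 hg1 i hi
    have hnn := (hmax g hg0 hg1).1.1 i
    have := (hsupp g hg0 hg1 i)
    rcases lt_or_eq_of_le hnn with h | h
    · exact absurd (this.mp h) hi
    · exact h.symm
  have hKpos : 0 < kstar := by
    by_contra hK
    push_neg at hK
    interval_cases kstar
    have h1 := hmax 1 one_pos le_rfl
    have hz : ∀ i : Fin m, x 1 i = 0 := fun i =>
      hx0 1 one_pos le_rfl i (by omega)
    have hs := h1.1.2
    rw [Finset.sum_congr rfl (fun i _ => hz i)] at hs
    simp at hs
  set S : ℝ := ∑ i : Fin m, if (i : ℕ) < kstar then (u i)⁻¹ else 0 with hSdef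
  have hi0m : (0 : ℕ) < m := hm
  have hS : 0 < S := by
    rw [hSdef]
    apply Finset.sum_pos'
    · intro i _
      split_ifs
      · exact (inv_pos.mpr (hpos i)).le
      · exact le_rfl
    · refine ⟨⟨0, hi0m⟩, Finset.mem_univ _, ?_⟩
      rw [if_pos (by simpa using hKpos)]
      exact inv_pos.mpr (hpos _)
  -- the closed form
  have hform : ∀ g, 0 < g → g ≤ 1 → ∀ i : Fin m, x g i = fml kstar S u g i := by
    intro g hg0 hg1
    obtain ⟨⟨hnn, hsum1⟩, hopt⟩ := hmax g hg0 hg1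
    -- perturbation inequality
    have key : ∀ i j : Fin m, i ≠ j → ∀ t : ℝ, -(x g j) ≤ t → t ≤ x g i →
        t * (u j * (1 - 2*g*x g j) - u i * (1 - 2*g*x g i)) ≤ g * t^2 * (u i + u j) := by
      intro i j hij t htj hti
      set y : Fin m → ℝ :=
        fun a => x g a + t * ((if a = j then 1 else 0) - (if a = i then 1 else 0)) with hy
      have hymem : y ∈ stdSimplex ℝ (Fin m) := by
        constructor
        · intro a
          by_cases hai : a = i
          · subst hai
            simp only [hy, if_neg hij, if_pos rfl, if_true]
            norm_num
            linarith
          · by_cases haj : a = j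
            · subst haj
              simp only [hy, if_pos rfl, if_neg hai, if_true]
              norm_num
              linarith
            · simp only [hy, if_neg hai, if_neg haj]
              have := hnn a; linarith
        · simp [hy, Finset.sum_add_distrib, ← Finset.mul_sum,
            Finset.sum_sub_distrib, Finset.sum_ite_eq', hsum1]
      have hle := hopt y hymem
      have h0 : ∀ a ∈ Finset.univ, a ∉ ({i, j} : Finset (Fin m)) →
          y a * (1 - g * y a) * u a - x g a * (1 - g * x g a) * u a = 0 := by
        intro a _ ha
        simp only [Finset.mem_insert, Finset.mem_singleton, not_or] at ha
        simp [hy, ha.1, ha.2]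
      have hdiff : ∑ a, (y a * (1 - g * y a) * u a - x g a * (1 - g * x g a) * u a)
          = t * (u j * (1 - 2*g*x g j) - u i * (1 - 2*g*x g i)) - g * t^2 * (u i + u j) := by
        rw [← Finset.sum_subset (Finset.subset_univ ({i, j} : Finset (Fin m))) h0,
          Finset.sum_pair hij]
        simp only [hy, if_pos rfl, if_neg hij, if_neg (Ne.symm hij), if_true]
        norm_num
        ring
      rw [Finset.sum_sub_distrib] at hdiff
      linarith
    -- first order conditions
    have foc : ∀ i j : Fin m, (i : ℕ) < kstar → (j : ℕ) < kstar →
        u j * (1 - 2*g*x g j) = u i * (1 - 2*g*x g i) := by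
      intro i j hi hj
      by_cases hij : i = j
      · subst hij; rfl
      · have hxi : 0 < x g i := (hsupp g hg0 hg1 i).mpr hi
        have hxj : 0 < x g j := (hsupp g hg0 hg1 j).mpr hj
        set d := u j * (1 - 2*g*x g j) - u i * (1 - 2*g*x g i) with hd
        have hU : 0 < u i + u j := by have := hpos i; have := hpos j; linarith
        have hd1 : d ≤ 0 := by
          by_contra hdp
          push_neg at hdp
          set t := min (x g i) (d / (2 * g * (u i + u j))) with ht
          have ht0 : 0 < t := lt_min hxi (div_pos hdp (by positivity))
          have hkey := key i j hij t (by linarith) (min_le_left _ _)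
          have ht2 : t * (2 * g * (u i + u j)) ≤ d :=
            (le_div_iff₀ (by positivity)).mp (min_le_right _ _)
          rw [← hd] at hkey
          nlinarith [mul_le_mul_of_nonneg_left ht2 ht0.le, mul_pos ht0 hdp]
        have hd2 : 0 ≤ d := by
          by_contra hdn
          push_neg at hdn
          set s := min (x g j) (-d / (2 * g * (u i + u j))) with hs
          have hs0 : 0 < s := lt_min hxj (div_pos (by linarith) (by positivity))
          have hkey := key i j hij (-s) (by simp [neg_le_neg_iff]; exact min_le_left _ _) (by linarith)
          have hs2 : s * (2 * g * (u i + u j)) ≤ -d :=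
            (le_div_iff₀ (by positivity)).mp (min_le_right _ _)
          rw [← hd] at hkey
          nlinarith [mul_le_mul_of_nonneg_left hs2 hs0.le, mul_pos hs0 (by linarith : (0:ℝ) < -d)]
        have : d = 0 := le_antisymm hd1 hd2
        rw [hd] at this; linarith
    set i0 : Fin m := ⟨0, hi0m⟩ with hi0
    have hi0k : (i0 : ℕ) < kstar := by simpa using hKpos
    set L : ℝ := u i0 * (1 - 2*g*x g i0) with hL
    have hLuniv : ∀ i : Fin m, (i : ℕ) < kstar → u i * (1 - 2*g*x g i) = L :=
      fun i hi => foc i0 i hi0k hi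
    have hxval : ∀ i : Fin m, (i : ℕ) < kstar →
        x g i = (1 - L * (u i)⁻¹) * (2*g)⁻¹ := by
      intro i hi
      have h := hLuniv i hi
      have hu := (hpos i).ne'
      field_simp
      linarith [h]
    have hcard : ∑ i : Fin m, (if (i : ℕ) < kstar then (1:ℝ) else 0) = kstar := by
      rw [prefix_sum_eq m kstar hk (fun _ => 1)]
      simp
    have hsumK : (2*g)⁻¹ * kstar - (2*g)⁻¹ * L * S = 1 := by
      have e1 : ∑ i : Fin m, (if (i : ℕ) < kstar then x g i else 0) = 1 := by
        rw [← hsum1]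
        exact Finset.sum_congr rfl fun i _ => by
          by_cases hi : (i : ℕ) < kstar
          · rw [if_pos hi]
          · rw [if_neg hi, hx0 g hg0 hg1 i hi]
      have e2 : ∀ i : Fin m, (if (i : ℕ) < kstar then x g i else 0)
          = (2*g)⁻¹ * (if (i : ℕ) < kstar then (1:ℝ) else 0)
            - (2*g)⁻¹ * L * (if (i : ℕ) < kstar then (u i)⁻¹ else 0) := by
        intro i
        by_cases hi : (i : ℕ) < kstar
        · rw [if_pos hi, if_pos hi, if_pos hi, hxval i hi]; ring
        · rw [if_neg hi, if_neg hi, if_neg hi]; ring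
      rw [Finset.sum_congr rfl (fun i _ => e2 i), Finset.sum_sub_distrib,
        ← Finset.mul_sum, ← Finset.mul_sum, hcard] at e1
      rw [hSdef]
      exact e1
    have hLval : L = ((kstar : ℝ) - 2*g) / S := by
      have hg : (2:ℝ) * g ≠ 0 := by positivity
      field_simp at hsumK ⊢
      linarith
    intro i
    by_cases hi : (i : ℕ) < kstar
    · rw [hxval i hi, hLval, fml, if_pos hi]
      have hu := (hpos i).ne'
      have hgne : g ≠ 0 := hg0.ne'
      field_simp
      ring
    · rw [hx0 g hg0 hg1 i hi, fml, if_neg hi]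
  -- identify the derivative
  have huniq : ∀ γ, 0 < γ → γ ≤ 1 → ∀ i : Fin m, x' γ i = dml kstar S u γ i := by
    intro γ h0 h1 i
    have hmem : γ ∈ Set.Ioc (0:ℝ) 1 := ⟨h0, h1⟩
    have hud : UniqueDiffWithinAt ℝ (Set.Ioc (0:ℝ) 1) γ := uniqueDiffOn_Ioc 0 1 γ hmem
    have hW1 : HasDerivWithinAt (fun t => x t i) (x' γ i) (Set.Ioc (0:ℝ) 1) γ :=
      (hderiv γ h0 h1 i).hasDerivWithinAt
    have hW2 : HasDerivWithinAt (fun t => fml kstar S u t i) (x' γ i) (Set.Ioc (0:ℝ) 1) γ :=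
      hW1.congr (fun t ht => (hform t ht.1 ht.2 i).symm) ((hform γ h0 h1 i).symm)
    have hW3 : HasDerivWithinAt (fun t => fml kstar S u t i) (dml kstar S u γ i)
        (Set.Ioc (0:ℝ) 1) γ := (fml_hasDerivAt kstar S u γ h0.ne' i).hasDerivWithinAt
    exact (hW2.derivWithin hud).symm.trans (hW3.derivWithin hud)
  -- conclude
  intro γ h0 h1 k hkm
  set k' := min k kstar with hk'
  have hk'K : k' ≤ kstar := min_le_right _ _
  have hk'm : k' ≤ m := le_trans hk'K hk
  have hre : ∀ i : Fin m, (if (i : ℕ) < k then x' γ i else 0)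
      = -((2*γ^2)⁻¹) * (if (i : ℕ) < k' then (1 - (kstar : ℝ) / (S * u i)) else 0) := by
    intro i
    rw [huniq γ h0 h1 i, dml]
    by_cases hik : (i : ℕ) < k <;> by_cases hiK : (i : ℕ) < kstar
    · rw [if_pos hik, if_pos hiK, if_pos (show (i : ℕ) < k' by omega)]
      ring
    · rw [if_pos hik, if_neg hiK, if_neg (show ¬ (i : ℕ) < k' by omega)]
      ring
    · rw [if_neg hik, if_neg (show ¬ (i : ℕ) < k' by omega)]
      ring
    · rw [if_neg hik, if_neg (show ¬ (i : ℕ) < k' by omega)]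
      ring
  have hsum_eq : (∑ i : Fin m, if (i : ℕ) < k then x' γ i else 0)
      = -((2*γ^2)⁻¹) * ∑ i : Fin m,
          (if (i : ℕ) < k' then (1 - (kstar : ℝ) / (S * u i)) else 0) := by
    rw [Finset.mul_sum]
    exact Finset.sum_congr rfl fun i _ => hre i
  rw [hsum_eq]
  have hT : 0 ≤ ∑ i : Fin m, (if (i : ℕ) < k' then (1 - (kstar : ℝ) / (S * u i)) else 0) := by
    set g0 : ℕ → ℝ := fun n => if h : n < m then (u ⟨n, h⟩)⁻¹ else 0 with hg0def
    have hV : ∀ K0, K0 ≤ m → (∑ i : Fin m, if (i : ℕ) < K0 then (u i)⁻¹ else 0)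
        = ∑ j ∈ Finset.range K0, g0 j := by
      intro K0 hK0
      rw [← prefix_sum_eq m K0 hK0 g0]
      exact Finset.sum_congr rfl fun i _ => by
        by_cases hi : (i : ℕ) < K0
        · rw [if_pos hi, if_pos hi]
          simp [hg0def, i.isLt]
        · rw [if_neg hi, if_neg hi]
    have hmono : ∀ a b, a ≤ b → b < kstar → g0 a ≤ g0 b := by
      intro a b hab hbK
      have hbm : b < m := lt_of_lt_of_le hbK hk
      have ham : a < m := lt_of_le_of_lt hab hbm
      simp only [hg0def, dif_pos hbm, dif_pos ham]
      exact inv_anti₀ (hpos _) (hdec ⟨a, ham⟩ ⟨b, hbm⟩ (by simpa [Fin.mk_le_mk]))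
    have hnn0 : ∀ a, a < kstar → 0 ≤ g0 a := by
      intro a haK
      have ham : a < m := lt_of_lt_of_le haK hk
      simp only [hg0def, dif_pos ham]
      exact (inv_pos.mpr (hpos _)).le
    have hcheb := cheb kstar k' hk'K g0 hmono hnn0
    have hSr : S = ∑ j ∈ Finset.range kstar, g0 j := by
      rw [hSdef, hV kstar hk]
    have e2 : ∀ i : Fin m, (if (i : ℕ) < k' then (1 - (kstar : ℝ) / (S * u i)) else 0)
        = (if (i : ℕ) < k' then (1:ℝ) else 0)
          - ((kstar : ℝ) / S) * (if (i : ℕ) < k' then (u i)⁻¹ else 0) := by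
      intro i
      by_cases hi : (i : ℕ) < k'
      · rw [if_pos hi, if_pos hi, if_pos hi]
        have hu := (hpos i).ne'
        field_simp
      · simp [hi]
    rw [Finset.sum_congr rfl fun i _ => e2 i, Finset.sum_sub_distrib, ← Finset.mul_sum,
      prefix_sum_eq m k' hk'm (fun _ => 1), hV k' hk'm]
    simp only [Finset.sum_const, Finset.card_range, nsmul_eq_mul, mul_one]
    have h2 : (kstar : ℝ) * (∑ j ∈ Finset.range k', g0 j) ≤ (k' : ℝ) * S := by
      rw [hSr]; exact hcheb
    have h3 : (kstar : ℝ) / S * (∑ j ∈ Finset.range k', g0 j) ≤ (k' : ℝ) := by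
      rw [div_mul_eq_mul_div, div_le_iff₀ hS]; linarith
    linarith
  have hneg : -((2*γ^2)⁻¹) ≤ 0 := by
    have : (0:ℝ) ≤ (2*γ^2)⁻¹ := by positivity
    linarith
  exact mul_nonpos_iff.mpr (Or.inr ⟨hneg, hT⟩)
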